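/- An edge-critical uniquely 2-colorable graph is a tree, and hence has exactly |V(G)| - 1 edges. -/

import Mathlib

open SimpleGraph

/-- `G` is uniquely `k`-colorable: its chromatic number is `k` and all proper
`k`-colorings induce the same partition of the vertex set into color classes. -/
def UniquelyKColorable {V : Type} (G : SimpleGraph V) (k : ℕ) : Prop :=
  G.chromaticNumber = k ∧
    ∀ c₁ c₂ : G.Coloring (Fin k), ∀ u v : V, c₁ u = c₁ v ↔ c₂ u = c₂ v

/-- `G` is an edge-critical uniquely `k`-colorable graph. -/
def EdgeCritical {V : Type} (G : SimpleGraph V) (k : ℕ) : Prop :=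
  UniquelyKColorable G k ∧
    ∀ e ∈ G.edgeSet, ¬ UniquelyKColorable (G.deleteEdges {e}) k

/-- A combinatorial plane embedding of `G`: a family of faces, each with a closed
boundary walk, such that every edge lies on face boundaries exactly twice in total,
and Euler's formula holds. -/
structure PlaneEmbedding {V : Type} [DecidableEq V] (G : SimpleGraph V) where
  Faces : Type
  [facesFintype : Fintype Faces]
  boundary : Faces → Σ v : V, G.Walk v v
  edge_count : ∀ e ∈ G.edgeSet, (∑ f : Faces, ((boundary f).2.edges.count e)) = 2
  euler : Nat.card V + Nat.card Faces = G.edgeSet.ncard + 1 + Nat.card G.ConnectedComponent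

attribute [instance] PlaneEmbedding.facesFintype

/-- The degree of a face: the length of its boundary walk (cut edges counted twice). -/
def PlaneEmbedding.fdeg {V : Type} [DecidableEq V] {G : SimpleGraph V}
    (emb : PlaneEmbedding G) (f : emb.Faces) : ℕ :=
  (emb.boundary f).2.length

def Planar {V : Type} [DecidableEq V] (G : SimpleGraph V) : Prop :=
  Nonempty (PlaneEmbedding G)

/-- Outerplanar: a plane embedding with one face incident with all vertices. -/
def Outerplanar {V : Type} [DecidableEq V] (G : SimpleGraph V) : Prop :=
  ∃ emb : PlaneEmbedding G, ∃ f : emb.Faces, ∀ v : V, v ∈ (emb.boundary f).2.support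

def MaximalOuterplanar {V : Type} [DecidableEq V] (G : SimpleGraph V) : Prop :=
  Outerplanar G ∧ ∀ u v : V, u ≠ v → ¬ G.Adj u v →
    ¬ Outerplanar (G ⊔ SimpleGraph.fromEdgeSet {s(u, v)})

/-- `s` is the edge set of a cycle of `G`. -/
def IsCycleSet {V : Type} (G : SimpleGraph V) (s : Set (Sym2 V)) : Prop :=
  ∃ (v : V) (w : G.Walk v v), w.IsCycle ∧ {e | e ∈ w.edges} = s

/-- Two cycles (given by their edge sets) are dependent: joined by a chain of cycles
in which consecutive cycles share an edge and all intermediate cycles have 4 vertices. -/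
def Dependent {V : Type} (G : SimpleGraph V) (s s' : Set (Sym2 V)) : Prop :=
  ∃ (t : ℕ) (C : Fin (t + 2) → Set (Sym2 V)),
    (∀ i, IsCycleSet G (C i)) ∧ C 0 = s ∧ C (Fin.last (t + 1)) = s' ∧
    (∀ i : Fin (t + 1), (C i.castSucc ∩ C i.succ).Nonempty) ∧
    ∀ i : Fin (t + 2), i ≠ 0 → i ≠ Fin.last (t + 1) → (C i).ncard = 4

/-- `G` has no separating 3-cycle: deleting the vertices of any triangle leaves a
connected graph. -/
def NoSeparating3Cycle {V : Type} (G : SimpleGraph V) : Prop :=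
  ∀ s : Finset V, G.IsNClique 3 s → (G.induce {v : V | v ∉ s}).Connected

/-- `H` is a triangle-subgraph of `G`: the union of a sequence of triangles each of
which (after the first) shares an edge with an earlier one. -/
def IsTriangleSubgraph {V : Type} (G : SimpleGraph V) (H : G.Subgraph) : Prop :=
  ∃ (t : ℕ) (T : Fin (t + 1) → Finset V),
    (∀ i, G.IsNClique 3 (T i)) ∧
    (∀ j : Fin (t + 1), j ≠ 0 →
      ∃ i : Fin (t + 1), i < j ∧ ((T i : Set V) ∩ (T j : Set V)).ncard = 2) ∧
    H = ⨆ i, (⊤ : G.Subgraph).induce (T i : Set V)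

def MaximalTriangleSubgraph {V : Type} (G : SimpleGraph V) (H : G.Subgraph) : Prop :=
  IsTriangleSubgraph G H ∧ ∀ H' : G.Subgraph, IsTriangleSubgraph G H' → ¬ H < H'

section Aux

variable {V : Type} {G : SimpleGraph V}

lemma coloring_parity (c : G.Coloring (Fin 2)) {u v : V} (p : G.Walk u v) :
    c u = c v ↔ Even p.length := by
  induction p with
  | nil => simp
  | @cons a b w h p ih =>
    have hne : c a ≠ c b := c.valid h
    rw [SimpleGraph.Walk.length_cons, Nat.even_add_one, ← ih]
    have h1 := (c a).isLt; have h2 := (c b).isLt; have h3 := (c w).isLt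
    simp only [Fin.ext_iff] at hne ⊢
    omega

lemma unique_of_preconnected (h : G.Preconnected) (c₁ c₂ : G.Coloring (Fin 2)) (u v : V) :
    c₁ u = c₁ v ↔ c₂ u = c₂ v := by
  obtain ⟨p⟩ := h u v
  rw [coloring_parity c₁ p, coloring_parity c₂ p]

lemma not_colorable_one (h : G.edgeSet.Nonempty) : ¬ G.Colorable 1 := by
  obtain ⟨e, he⟩ := h
  induction e with
  | h a b =>
    rintro ⟨c⟩
    exact c.valid (G.mem_edgeSet.mp he) (Subsingleton.elim _ _)

lemma connected_of_uniquely (h : UniquelyKColorable G 2) : G.Connected := by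
  have hcol : G.Colorable 2 :=
    SimpleGraph.chromaticNumber_le_iff_colorable.mp (le_of_eq h.1)
  have hne : Nonempty V := by
    by_contra hemp
    rw [not_nonempty_iff] at hemp
    have h0 := G.chromaticNumber_eq_zero_of_isEmpty
    rw [h.1] at h0
    simp at h0
  obtain ⟨c₁⟩ := hcol
  rw [SimpleGraph.connected_iff]
  refine ⟨fun u v => ?_, hne⟩
  by_contra hr
  classical
  have hvalid : ∀ a b : V, G.Adj a b →
      (if G.Reachable u a then c₁ a + 1 else c₁ a) ≠
      (if G.Reachable u b then c₁ b + 1 else c₁ b) := by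
    intro a b hab hEq
    have hiff : G.Reachable u a ↔ G.Reachable u b :=
      ⟨fun hh => hh.trans hab.reachable, fun hh => hh.trans hab.symm.reachable⟩
    have hnec := c₁.valid hab
    by_cases hra : G.Reachable u a
    · rw [if_pos hra, if_pos (hiff.mp hra)] at hEq
      exact hnec (add_right_cancel hEq)
    · rw [if_neg hra, if_neg (fun hh => hra (hiff.mpr hh))] at hEq
      exact hnec hEq
  let c₂ : G.Coloring (Fin 2) :=
    SimpleGraph.Coloring.mk (fun x => if G.Reachable u x then c₁ x + 1 else c₁ x)
      (fun hab => hvalid _ _ hab)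
  have hiff2 := h.2 c₁ c₂ u v
  have h1 : c₂ u = c₁ u + 1 := by
    show (if G.Reachable u u then c₁ u + 1 else c₁ u) = c₁ u + 1
    rw [if_pos (SimpleGraph.Reachable.refl u)]
  have h2 : c₂ v = c₁ v := by
    show (if G.Reachable u v then c₁ v + 1 else c₁ v) = c₁ v
    rw [if_neg hr]
  rw [h1, h2] at hiff2
  have ha := (c₁ u).isLt; have hb := (c₁ v).isLt
  simp only [Fin.ext_iff, Fin.val_add, Fin.val_one] at hiff2
  omega

lemma preconnected_delete (hconn : G.Preconnected) {e : Sym2 V}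
    (hcyc : ∃ u, ∃ p : G.Walk u u, p.IsCycle ∧ e ∈ p.edges) :
    (G.deleteEdges {e}).Preconnected := by
  induction e with
  | h x y =>
    have hxy := SimpleGraph.adj_and_reachable_delete_edges_iff_exists_cycle.mpr hcyc
    intro a b
    obtain ⟨w⟩ := hconn a b
    induction w with
    | nil => exact SimpleGraph.Reachable.refl _
    | @cons a' b' c' hadj p ih =>
      refine SimpleGraph.Reachable.trans ?_ ih
      by_cases he : s(a', b') = s(x, y)
      · rw [Sym2.eq_iff] at he
        rcases he with ⟨rfl, rfl⟩ | ⟨rfl, rfl⟩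
        · exact hxy.2
        · exact hxy.2.symm
      · exact SimpleGraph.Adj.reachable (by
          rw [SimpleGraph.deleteEdges_adj]
          exact ⟨hadj, by simpa using he⟩)

lemma acyclic_of_critical (hG : EdgeCritical G 2) : G.IsAcyclic := by
  intro v p hp
  classical
  have hconn := connected_of_uniquely hG.1
  have hlen : 3 ≤ p.edges.length := by
    rw [SimpleGraph.Walk.length_edges]
    exact hp.three_le_length
  set e : Sym2 V := p.edges.get ⟨0, by omega⟩ with hedef
  set e' : Sym2 V := p.edges.get ⟨1, by omega⟩ with he'def
  have hee' : e ≠ e' := by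
    intro hh
    have hnd := hp.edges_nodup
    have := (List.Nodup.get_inj_iff hnd).mp hh
    simp at this
  have heG : e ∈ G.edgeSet := p.edges_subset_edgeSet (List.get_mem _ _)
  have he'G : e' ∈ G.edgeSet := p.edges_subset_edgeSet (List.get_mem _ _)
  have he'G' : e' ∈ (G.deleteEdges {e}).edgeSet := by
    rw [SimpleGraph.edgeSet_deleteEdges]
    exact ⟨he'G, by simpa using fun hh => hee' hh.symm⟩
  have hcol2 : (G.deleteEdges {e}).Colorable 2 := by
    have := SimpleGraph.chromaticNumber_le_iff_colorable.mp (le_of_eq hG.1.1)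
    exact this.mono_left (SimpleGraph.deleteEdges_le _)
  have hnc1 : ¬ (G.deleteEdges {e}).Colorable 1 := not_colorable_one ⟨e', he'G'⟩
  have hpre : (G.deleteEdges {e}).Preconnected :=
    preconnected_delete hconn.preconnected ⟨v, p, hp, List.get_mem _ _⟩
  refine hG.2 e heG ⟨?_, fun c₁ c₂ u w => unique_of_preconnected hpre c₁ c₂ u w⟩
  refine le_antisymm (hcol2.chromaticNumber_le) ?_
  have hgt : ¬ (G.deleteEdges {e}).chromaticNumber ≤ 1 := by
    intro hle
    exact hnc1 (SimpleGraph.chromaticNumber_le_iff_colorable.mp (by exact_mod_cast hle))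
  have : (1 : ℕ∞) < (G.deleteEdges {e}).chromaticNumber := lt_of_not_ge hgt
  have h2 := Order.add_one_le_of_lt this
  exact_mod_cast h2

end Aux

/-- The set of edges of `G` with one end in `A` and the other in `B`. -/
def edgesBetween {V : Type} (G : SimpleGraph V) (A B : Set V) : Set (Sym2 V) :=
  {e | ∃ a ∈ A, ∃ b ∈ B, G.Adj a b ∧ e = s(a, b)}
/-- An edge-critical uniquely 2-colorable graph is a tree, hence has `|V| - 1` edges. -/
theorem stmt_3 {V : Type} [Fintype V] (G : SimpleGraph V)
    (hG : EdgeCritical G 2) :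
    G.IsTree ∧ G.edgeSet.ncard = Fintype.card V - 1 := by
  classical
  have hconn := connected_of_uniquely hG.1
  have hacyc := acyclic_of_critical hG
  have htree : G.IsTree := ⟨hconn, hacyc⟩
  refine ⟨htree, ?_⟩
  haveI : Fintype G.edgeSet := Set.Finite.fintype (Set.toFinite _)
  have hcard := htree.card_edgeFinset
  rw [Set.ncard_eq_toFinset_card']
  have : G.edgeSet.toFinset = G.edgeFinset := rfl
  rw [this]
  omega
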